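/- Let a₁ ≤ a₂ ≤ ... ≤ aₙ and g₁ ≤ g₂ ≤ ... ≤ gₙ be real numbers. For any permutation σ of {1,...,n} and any k ∈ {1,...,n}, the sum of the k largest values among |aᵢ - g_{σ(i)}| is at least the sum of the k largest values among |aᵢ - gᵢ|. That is, the identity (greedy left-to-right) matching minimizes the k-centrum cost. -/

import Mathlib

/-- The `k`-centrum value of `f`: the largest possible sum of `f` over a subset of size `k`
(i.e. the sum of the `k` largest values of `f`). -/
noncomputable def kSum (n k : ℕ) (f : Fin n → ℝ) : ℝ :=
  sSup {x : ℝ | ∃ S : Finset (Fin n), S.card = k ∧ x = ∑ i ∈ S, f i}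

private lemma kSum_bddAbove (n k : ℕ) (f : Fin n → ℝ) :
    BddAbove {x : ℝ | ∃ S : Finset (Fin n), S.card = k ∧ x = ∑ i ∈ S, f i} := by
  apply Set.Finite.bddAbove
  apply Set.Finite.subset (Set.finite_range (fun S : Finset (Fin n) => ∑ i ∈ S, f i))
  rintro x ⟨S, _, rfl⟩
  exact ⟨S, rfl⟩

private lemma kSum_le (n k : ℕ) (hk : k ≤ n) (f f' : Fin n → ℝ)
    (H : ∀ S : Finset (Fin n), S.card = k →
      ∃ T : Finset (Fin n), T.card = k ∧ ∑ p ∈ S, f' p ≤ ∑ p ∈ T, f p) :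
    kSum n k f' ≤ kSum n k f := by
  obtain ⟨S0, _, hS0⟩ := Finset.exists_subset_card_eq (s := (Finset.univ : Finset (Fin n))) (n := k)
    (by simpa using hk)
  unfold kSum
  refine csSup_le ⟨∑ p ∈ S0, f' p, S0, hS0, rfl⟩ ?_
  rintro x ⟨S, hS, rfl⟩
  obtain ⟨T, hT, hle⟩ := H S hS
  exact le_csSup_of_le (kSum_bddAbove n k f) ⟨T, hT, rfl⟩ hle

private lemma kSum_exchange (n k : ℕ) (hk : k ≤ n) (f f' : Fin n → ℝ) (i j : Fin n)
    (hij : i ≠ j)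
    (hoff : ∀ p, p ≠ i → p ≠ j → f' p = f p)
    (hsum : f' i + f' j ≤ f i + f j)
    (hi : f' i ≤ max (f i) (f j)) (hj : f' j ≤ max (f i) (f j)) :
    kSum n k f' ≤ kSum n k f := by
  apply kSum_le n k hk
  intro S hS
  by_cases hiS : i ∈ S <;> by_cases hjS : j ∈ S
  · refine ⟨S, hS, ?_⟩
    have hjS' : j ∈ S.erase i := Finset.mem_erase.2 ⟨Ne.symm hij, hjS⟩
    have key : ∀ h : Fin n → ℝ,
        ∑ p ∈ S, h p = h i + (h j + ∑ p ∈ (S.erase i).erase j, h p) := by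
      intro h
      rw [← Finset.add_sum_erase _ _ hiS, ← Finset.add_sum_erase _ _ hjS']
    rw [key f, key f']
    have heq : ∑ p ∈ (S.erase i).erase j, f' p = ∑ p ∈ (S.erase i).erase j, f p := by
      apply Finset.sum_congr rfl
      intro p hp
      exact hoff p (Finset.mem_erase.1 (Finset.mem_of_mem_erase hp)).1
        (Finset.mem_erase.1 hp).1
    rw [heq]
    linarith
  · -- i ∈ S, j ∉ S
    have hk1 : 1 ≤ k := by rw [← hS]; exact Finset.card_pos.2 ⟨i, hiS⟩
    set m := if f j ≤ f i then i else j with hm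
    have hmax : max (f i) (f j) = f m := by
      rw [hm]; split_ifs with h
      · exact max_eq_left h
      · exact max_eq_right (le_of_not_ge h)
    have hmS : m ∉ S.erase i := by
      rw [hm]; split_ifs
      · exact Finset.notMem_erase i S
      · intro hmem; exact hjS (Finset.mem_of_mem_erase hmem)
    refine ⟨insert m (S.erase i), ?_, ?_⟩
    · rw [Finset.card_insert_of_notMem hmS, Finset.card_erase_of_mem hiS, hS]
      omega
    · rw [Finset.sum_insert hmS, ← Finset.add_sum_erase _ f' hiS]
      have heq : ∑ p ∈ S.erase i, f' p = ∑ p ∈ S.erase i, f p :=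
        Finset.sum_congr rfl (fun p hp => hoff p (Finset.mem_erase.1 hp).1
          (fun h => hjS (h ▸ Finset.mem_of_mem_erase hp)))
      rw [heq]
      have : f' i ≤ f m := hmax ▸ hi
      linarith
  · -- j ∈ S, i ∉ S
    have hk1 : 1 ≤ k := by rw [← hS]; exact Finset.card_pos.2 ⟨j, hjS⟩
    set m := if f j ≤ f i then i else j with hm
    have hmax : max (f i) (f j) = f m := by
      rw [hm]; split_ifs with h
      · exact max_eq_left h
      · exact max_eq_right (le_of_not_ge h)
    have hmS : m ∉ S.erase j := by
      rw [hm]; split_ifs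
      · intro hmem; exact hiS (Finset.mem_of_mem_erase hmem)
      · exact Finset.notMem_erase j S
    refine ⟨insert m (S.erase j), ?_, ?_⟩
    · rw [Finset.card_insert_of_notMem hmS, Finset.card_erase_of_mem hjS, hS]
      omega
    · rw [Finset.sum_insert hmS, ← Finset.add_sum_erase _ f' hjS]
      have heq : ∑ p ∈ S.erase j, f' p = ∑ p ∈ S.erase j, f p :=
        Finset.sum_congr rfl (fun p hp =>
          hoff p (fun h => hiS (h ▸ Finset.mem_of_mem_erase hp)) (Finset.mem_erase.1 hp).1)
      rw [heq]
      have : f' j ≤ f m := hmax ▸ hj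
      linarith
  · refine ⟨S, hS, le_of_eq ?_⟩
    exact Finset.sum_congr rfl (fun p hp =>
      hoff p (fun h => hiS (h ▸ hp)) (fun h => hjS (h ▸ hp)))

private lemma abs_sum_exch {x x' y y' : ℝ} (hx : x ≤ x') (hy : y ≤ y') :
    |x - y| + |x' - y'| ≤ |x - y'| + |x' - y| := by
  rcases abs_cases (x - y) with h1 | h1 <;> rcases abs_cases (x' - y') with h2 | h2 <;>
    rcases abs_cases (x - y') with h3 | h3 <;> rcases abs_cases (x' - y) with h4 | h4 <;>
      linarith [h1.1, h1.2, h2.1, h2.2, h3.1, h3.2, h4.1, h4.2]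

private lemma abs_max_exch1 {x x' y y' : ℝ} (hx : x ≤ x') (hy : y ≤ y') :
    |x - y| ≤ max |x - y'| |x' - y| := by
  rcases le_total x y with h | h
  · apply le_max_of_le_left
    have h1 : |x - y| = y - x := by rw [abs_sub_comm]; exact abs_of_nonneg (by linarith)
    have h2 := neg_le_abs (x - y')
    linarith
  · apply le_max_of_le_right
    have h1 : |x - y| = x - y := abs_of_nonneg (by linarith)
    have h2 := le_abs_self (x' - y)
    linarith

private lemma abs_max_exch2 {x x' y y' : ℝ} (hx : x ≤ x') (hy : y ≤ y') :
    |x' - y'| ≤ max |x - y'| |x' - y| := by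
  rcases le_total x' y' with h | h
  · apply le_max_of_le_left
    have h1 : |x' - y'| = y' - x' := by rw [abs_sub_comm]; exact abs_of_nonneg (by linarith)
    have h2 := neg_le_abs (x - y')
    linarith
  · apply le_max_of_le_right
    have h1 : |x' - y'| = x' - y' := abs_of_nonneg (by linarith)
    have h2 := le_abs_self (x' - y)
    linarith

private lemma main_aux (n : ℕ) (a g : Fin n → ℝ) (ha : Monotone a) (hg : Monotone g)
    (k : ℕ) (hk : k ≤ n) :
    ∀ m (σ : Equiv.Perm (Fin n)), σ.support.card ≤ m →
      kSum n k (fun i => |a i - g i|) ≤ kSum n k (fun i => |a i - g (σ i)|) := by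
  intro m
  induction m with
  | zero =>
    intro σ hσ
    have : σ = 1 := by
      rw [← Equiv.Perm.support_eq_empty_iff]
      exact Finset.card_eq_zero.1 (Nat.le_zero.1 hσ)
    subst this
    simp
  | succ m ih =>
    intro σ hσ
    by_cases h1 : σ = 1
    · subst h1; simp
    · have hne : σ.support.Nonempty := by
        rw [Finset.nonempty_iff_ne_empty]
        intro h; exact h1 (Equiv.Perm.support_eq_empty_iff.1 h)
      set i := σ.support.min' hne with hidef
      have hi_mem : i ∈ σ.support := σ.support.min'_mem hne
      have hi : σ i ≠ i := Equiv.Perm.mem_support.1 hi_mem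
      have hfix : ∀ p : Fin n, p < i → σ p = p := by
        intro p hp
        by_contra h
        exact absurd (σ.support.min'_le p (Equiv.Perm.mem_support.2 h)) (not_le.2 hp)
      have hlt : i < σ i := by
        rcases lt_trichotomy (σ i) i with h | h | h
        · have := hfix (σ i) h
          exact absurd (σ.injective this) hi
        · exact absurd h hi
        · exact h
      set j := σ⁻¹ i with hjdef
      have hj : σ j = i := Equiv.apply_symm_apply σ i
      have hji : j ≠ i := by
        intro h; rw [h] at hj; exact hi hj
      have hij : i < j := by
        rcases lt_trichotomy j i with h | h | h
        · have := hfix j h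
          rw [this] at hj
          exact absurd hj hji
        · exact absurd h hji
        · exact h
      set σ' := σ * Equiv.swap i j with hσ'def
      have hσ'i : σ' i = i := by
        rw [hσ'def, Equiv.Perm.mul_apply, Equiv.swap_apply_left, hj]
      have hσ'j : σ' j = σ i := by
        rw [hσ'def, Equiv.Perm.mul_apply, Equiv.swap_apply_right]
      have hσ'p : ∀ p, p ≠ i → p ≠ j → σ' p = σ p := by
        intro p hpi hpj
        rw [hσ'def, Equiv.Perm.mul_apply, Equiv.swap_apply_of_ne_of_ne hpi hpj]
      have hsupp : σ'.support ⊆ σ.support.erase i := by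
        intro p hp
        have hp' : σ' p ≠ p := Equiv.Perm.mem_support.1 hp
        rw [Finset.mem_erase]
        constructor
        · intro h; rw [h] at hp'; exact hp' hσ'i
        · by_cases hpi : p = i
          · exact absurd (hpi ▸ hσ'i) (hpi ▸ hp')
          · by_cases hpj : p = j
            · subst hpj
              exact Equiv.Perm.mem_support.2 (by rw [hj]; exact hij.ne)
            · exact Equiv.Perm.mem_support.2 ((hσ'p p hpi hpj) ▸ hp')
      have hcard : σ'.support.card ≤ m := by
        have h2 := Finset.card_le_card hsupp
        rw [Finset.card_erase_of_mem hi_mem] at h2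
        have h3 : 1 ≤ σ.support.card := Finset.card_pos.2 ⟨i, hi_mem⟩
        omega
      calc kSum n k (fun p => |a p - g p|)
          ≤ kSum n k (fun p => |a p - g (σ' p)|) := ih σ' hcard
        _ ≤ kSum n k (fun p => |a p - g (σ p)|) := by
            have hx : a i ≤ a j := ha hij.le
            have hgj : g (σ j) = g i := by rw [hj]
            have hy : g i ≤ g (σ i) := by
              rw [← hgj]; exact hg (by rw [hj]; exact hlt.le)
            apply kSum_exchange n k hk _ _ i j hij.ne
            · intro p hpi hpj
              simp only [hσ'p p hpi hpj]
            · simp only [hσ'i, hσ'j, hgj]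
              exact abs_sum_exch hx hy
            · simp only [hσ'i, hσ'j, hgj]
              exact abs_max_exch1 hx hy
            · simp only [hσ'i, hσ'j, hgj]
              exact abs_max_exch2 hx hy

/-- The identity (greedy left-to-right) matching minimizes the k-centrum cost. -/
theorem stmt_0 (n : ℕ) (a g : Fin n → ℝ) (ha : Monotone a) (hg : Monotone g)
    (σ : Equiv.Perm (Fin n)) (k : ℕ) (hk1 : 1 ≤ k) (hkn : k ≤ n) :
    kSum n k (fun i => |a i - g i|) ≤ kSum n k (fun i => |a i - g (σ i)|) := by
  exact main_aux n a g ha hg k hkn σ.support.card σ le_rfl
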